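/- Let w be a homogeneous potential of degree N+1 (with zero constant term), let R ⊆ V^{⊗N} be the span of the cyclic derivatives ∂_{x_1}(w),…,∂_{x_n}(w), and let R_{N+1} = (R⊗V) ∩ (V⊗R) ⊆ V^{⊗(N+1)}. Then c(w) ∈ R_{N+1}. -/

import Mathlib

open scoped TensorProduct BigOperators
noncomputable section

/-- The free associative algebra on `n` (degree-one) variables, realized as the
monoid algebra of the free monoid on `Fin n`. -/
abbrev FA (k : Type*) [CommRing k] (n : ℕ) := MonoidAlgebra k (FreeMonoid (Fin n))

namespace FA

variable {k : Type*} [CommRing k] {n : ℕ}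

/-- The monomial (word) `x_{p 0} x_{p 1} ⋯` associated to a list of indices. -/
def word (p : List (Fin n)) : FA k n := MonoidAlgebra.single (FreeMonoid.ofList p) 1

/-- The generator `x_i`. -/
def X (i : Fin n) : FA k n := word [i]

/-- Cyclic sum of a monomial: `c(a_1⋯a_r) = ∑_i a_i⋯a_r a_1⋯a_{i-1}`. -/
def cycWord (p : List (Fin n)) : FA k n :=
  ∑ i ∈ Finset.range p.length, word (p.rotate i)

/-- Cyclic sum operator `c : T(V) → T(V)`, extended linearly from monomials. -/
def cyc (f : FA k n) : FA k n :=
  f.coeff.sum fun p a => a • cycWord (FreeMonoid.toList p)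

/-- Cyclic derivative of a monomial: `∂_x(p) = ∑_{p = u x v} v u`. -/
def cycDerWord (x : Fin n) (p : List (Fin n)) : FA k n :=
  ∑ i ∈ Finset.range p.length,
    if p[i]? = some x then word (p.drop (i + 1) ++ p.take i) else 0

/-- Cyclic derivative `∂_x : T(V) → T(V)`, extended linearly from monomials. -/
def cycDer (x : Fin n) (f : FA k n) : FA k n :=
  f.coeff.sum fun p a => a • cycDerWord x (FreeMonoid.toList p)

/-- Ordinary partial derivative of a monomial: `∂p/∂x = ∑_{p = u x v} u ⊗ v`. -/
def pderWord (x : Fin n) (p : List (Fin n)) : FA k n ⊗[k] FA k n :=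
  ∑ i ∈ Finset.range p.length,
    if p[i]? = some x then (word (p.take i)) ⊗ₜ[k] (word (p.drop (i + 1))) else 0

/-- Ordinary partial derivative `∂/∂x : T(V) → T(V) ⊗ T(V)`, extended linearly. -/
def pder (x : Fin n) (f : FA k n) : FA k n ⊗[k] FA k n :=
  f.coeff.sum fun p a => a • pderWord x (FreeMonoid.toList p)

/-- `f` is homogeneous of degree `r`: every monomial in its support is a word of length `r`. -/
def IsHomog (r : ℕ) (f : FA k n) : Prop :=
  ∀ p ∈ f.coeff.support, (FreeMonoid.toList p).length = r

end FA


section Aux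

lemma sum_shift_eq {M : Type*} [AddCommGroup M] (g : ℕ → M) (m : ℕ) (h : g m = g 0) :
    ∑ i ∈ Finset.range m, g (i + 1) = ∑ i ∈ Finset.range m, g i := by
  have h1 := Finset.sum_range_succ' g m
  have h2 := Finset.sum_range_succ g m
  rw [h1, h] at h2
  exact add_right_cancel h2

namespace FA

variable {k : Type*} [CommRing k] {n : ℕ}

lemma word_mul (p q : List (Fin n)) : (word p * word q : FA k n) = word (p ++ q) := by
  simp only [word, MonoidAlgebra.single_mul_single, one_mul]
  rfl

lemma euler_word_right (p : List (Fin n)) :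
    ∑ x : Fin n, (cycDerWord x p * X x : FA k n) = cycWord p := by
  have key : ∀ x : Fin n, (cycDerWord x p * X x : FA k n)
      = ∑ i ∈ Finset.range p.length,
        if p[i]? = some x then (word (p.rotate (i+1)) : FA k n) else 0 := by
    intro x
    rw [cycDerWord, Finset.sum_mul]
    refine Finset.sum_congr rfl fun i hi => ?_
    rw [Finset.mem_range] at hi
    split_ifs with h
    · rw [X, word_mul]
      congr 1
      have h' : p[i] = x := by simpa [List.getElem?_eq_getElem hi] using h
      have hrot : p.rotate (i+1) = p.drop (i+1) ++ p.take (i+1) := by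
        rcases Nat.lt_or_ge (i+1) p.length with h1 | h1
        · exact List.rotate_eq_drop_append_take h1.le
        · have : i + 1 = p.length := le_antisymm (by omega) h1
          simp [this, List.rotate_length]
      rw [hrot, List.take_succ, List.getElem?_eq_getElem hi, h']
      simp
    · simp
  rw [Finset.sum_congr rfl fun x _ => key x, Finset.sum_comm]
  rw [cycWord]
  have shift : ∀ i ∈ Finset.range p.length,
      (∑ x : Fin n, if p[i]? = some x then (word (p.rotate (i+1)) : FA k n) else 0)
      = word (p.rotate (i+1)) := by
    intro i hi
    rw [Finset.mem_range] at hi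
    rw [List.getElem?_eq_getElem hi]
    simp
  rw [Finset.sum_congr rfl shift]
  exact sum_shift_eq (fun i => (word (p.rotate i) : FA k n)) p.length
    (by simp [List.rotate_length])

lemma euler_word_left (p : List (Fin n)) :
    ∑ x : Fin n, (X x * cycDerWord x p : FA k n) = cycWord p := by
  have key : ∀ x : Fin n, (X x * cycDerWord x p : FA k n)
      = ∑ i ∈ Finset.range p.length,
        if p[i]? = some x then (word (p.rotate i) : FA k n) else 0 := by
    intro x
    rw [cycDerWord, Finset.mul_sum]
    refine Finset.sum_congr rfl fun i hi => ?_
    rw [Finset.mem_range] at hi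
    split_ifs with h
    · rw [X, word_mul]
      congr 1
      have h' : p[i] = x := by simpa [List.getElem?_eq_getElem hi] using h
      rw [List.rotate_eq_drop_append_take hi.le, List.drop_eq_getElem_cons hi, h']
      simp
    · simp
  rw [Finset.sum_congr rfl fun x _ => key x, Finset.sum_comm, cycWord]
  refine Finset.sum_congr rfl fun i hi => ?_
  rw [Finset.mem_range] at hi
  rw [List.getElem?_eq_getElem hi]
  simp

lemma cyc_eq_sum_right (f : FA k n) :
    cyc f = ∑ x : Fin n, cycDer x f * X x := by
  rw [cyc, Finsupp.sum]
  have : ∀ x : Fin n, cycDer x f * X x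
      = ∑ p ∈ f.coeff.support, f.coeff p • (cycDerWord x (FreeMonoid.toList p) * X x) := by
    intro x
    rw [cycDer, Finsupp.sum, Finset.sum_mul]
    exact Finset.sum_congr rfl fun p _ => smul_mul_assoc _ _ _
  rw [Finset.sum_congr rfl fun x _ => this x, Finset.sum_comm]
  refine Finset.sum_congr rfl fun p _ => ?_
  rw [← Finset.smul_sum, euler_word_right]

lemma cyc_eq_sum_left (f : FA k n) :
    cyc f = ∑ x : Fin n, X x * cycDer x f := by
  rw [cyc, Finsupp.sum]
  have : ∀ x : Fin n, X x * cycDer x f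
      = ∑ p ∈ f.coeff.support, f.coeff p • (X x * cycDerWord x (FreeMonoid.toList p)) := by
    intro x
    rw [cycDer, Finsupp.sum, Finset.mul_sum]
    exact Finset.sum_congr rfl fun p _ => (mul_smul_comm _ _ _)
  rw [Finset.sum_congr rfl fun x _ => this x, Finset.sum_comm]
  refine Finset.sum_congr rfl fun p _ => ?_
  rw [← Finset.smul_sum, euler_word_left]

end FA

end Aux

/-- For a homogeneous potential `w` of degree `N+1`, with `R` the span of the cyclic
derivatives and `R_{N+1} = (R⊗V) ∩ (V⊗R)` (realized inside the free algebra as the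
intersection of the spans of `R·V` and `V·R`), one has `c(w) ∈ R_{N+1}`. -/
theorem cyc_mem_R_inter {k : Type*} [Field k] [CharZero k] (n N : ℕ) (hN : 2 ≤ N)
    (w : FA k n) (hw : FA.IsHomog (N + 1) w) :
    FA.cyc w ∈
      (Submodule.span k {y : FA k n |
          ∃ r ∈ Submodule.span k (Set.range fun i : Fin n => FA.cycDer i w),
            ∃ i : Fin n, y = r * FA.X i}) ⊓
      (Submodule.span k {y : FA k n |
          ∃ r ∈ Submodule.span k (Set.range fun i : Fin n => FA.cycDer i w),
            ∃ i : Fin n, y = FA.X i * r}) := by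
  constructor
  · rw [FA.cyc_eq_sum_right w]
    refine Submodule.sum_mem _ fun x _ => Submodule.subset_span ?_
    exact ⟨FA.cycDer x w, Submodule.subset_span ⟨x, rfl⟩, x, rfl⟩
  · rw [FA.cyc_eq_sum_left w]
    refine Submodule.sum_mem _ fun x _ => Submodule.subset_span ?_
    exact ⟨FA.cycDer x w, Submodule.subset_span ⟨x, rfl⟩, x, rfl⟩
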